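/- Define the binary Shannon entropy H₂(x) = −x·log₂x − (1−x)·log₂(1−x), with the convention 0·log₂0 = 0. For all p, q ∈ (0,1), setting a₁ = (1-p)(1-q)/(1-pq), a₂ = p(1-q)/(1-pq), a₃ = (1-p)q/(1-pq), one has (a₁·log₂a₁ + a₂·log₂a₂ + a₃·log₂a₃) − [((1-p)/(1-pq))·log₂((1-p)/(2(1-pq))) + (p(1-q)/(1-pq))·log₂(p(1-q)/(2(1-pq)))] = 1 − (1-p)·H₂(q)/(1−pq). -/
import Mathlib


/-- The binary Shannon entropy `H₂(x) = −x·log₂x − (1−x)·log₂(1−x)`,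
with the convention `0·log₂0 = 0` (automatic since `Real.logb 2 0 = 0`). -/
noncomputable def H2 (x : ℝ) : ℝ := -(x * Real.logb 2 x) - (1 - x) * Real.logb 2 (1 - x)

theorem relative_entropy_identity (p q : ℝ) (hp : p ∈ Set.Ioo (0:ℝ) 1)
    (hq : q ∈ Set.Ioo (0:ℝ) 1) :
    (((1 - p) * (1 - q) / (1 - p * q)) * Real.logb 2 ((1 - p) * (1 - q) / (1 - p * q)) +
        (p * (1 - q) / (1 - p * q)) * Real.logb 2 (p * (1 - q) / (1 - p * q)) +
        ((1 - p) * q / (1 - p * q)) * Real.logb 2 ((1 - p) * q / (1 - p * q))) -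
      (((1 - p) / (1 - p * q)) * Real.logb 2 ((1 - p) / (2 * (1 - p * q))) +
        (p * (1 - q) / (1 - p * q)) * Real.logb 2 (p * (1 - q) / (2 * (1 - p * q)))) =
    1 - (1 - p) * H2 q / (1 - p * q) := by
  obtain ⟨hp0, hp1⟩ := hp
  obtain ⟨hq0, hq1⟩ := hq
  have hp' : (1 : ℝ) - p > 0 := by linarith
  have hq' : (1 : ℝ) - q > 0 := by linarith
  have hD : (1 : ℝ) - p * q > 0 := by nlinarith
  have hp0' : p ≠ 0 := ne_of_gt hp0
  have hq0' : q ≠ 0 := ne_of_gt hq0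
  have hp'' : (1 : ℝ) - p ≠ 0 := ne_of_gt hp'
  have hq'' : (1 : ℝ) - q ≠ 0 := ne_of_gt hq'
  have hD' : (1 : ℝ) - p * q ≠ 0 := ne_of_gt hD
  have h2 : (2 : ℝ) ≠ 0 := by norm_num
  have l2 : Real.logb 2 2 = 1 := by simp
  rw [Real.logb_div (by positivity) hD', Real.logb_div (by positivity) hD',
    Real.logb_div (by positivity) hD',
    Real.logb_div hp'' (by positivity), Real.logb_div (by positivity) (by positivity),
    Real.logb_mul hp'' hq'', Real.logb_mul hp0' hq'', Real.logb_mul hp'' hq0',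
    Real.logb_mul h2 hD', l2]
  unfold H2
  field_simp
  ring
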